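/- For any graph G, the maximum nullity M(G) is at most the zero forcing number Z(G). -/

import Mathlib

/-- The set of real symmetric matrices whose off-diagonal zero/nonzero
pattern matches the edges of the graph `G`. -/
def SG {V : Type*} (G : SimpleGraph V) : Set (Matrix V V ℝ) :=
  {A | A.IsSymm ∧ ∀ i j : V, i ≠ j → (A i j ≠ 0 ↔ G.Adj i j)}

/-- Maximum nullity of a graph. -/
noncomputable def maxNullity {V : Type*} [Fintype V] (G : SimpleGraph V) : ℕ :=
  sSup {k | ∃ A ∈ SG G, Fintype.card V - A.rank = k}

/-- Vertices that eventually become blue starting from the blue set `B`,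
under the standard color change rule: a blue vertex with a unique white
neighbor colors that neighbor blue. -/
inductive ZFClosed {V : Type*} (G : SimpleGraph V) (B : Set V) : V → Prop
  | init {v : V} (h : v ∈ B) : ZFClosed G B v
  | force {u v : V} (hu : ZFClosed G B u) (hadj : G.Adj u v)
      (huniq : ∀ w, G.Adj u w → w ≠ v → ZFClosed G B w) : ZFClosed G B v

/-- `B` is a zero forcing set of `G`. -/
def IsZeroForcingSet {V : Type*} (G : SimpleGraph V) (B : Set V) : Prop :=
  ∀ v : V, ZFClosed G B v

/-- The zero forcing number of `G`: the minimum size of a zero forcing set. -/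
noncomputable def zfNum {V : Type*} [Fintype V] (G : SimpleGraph V) : ℕ :=
  sInf {k | ∃ B : Finset V, IsZeroForcingSet G ↑B ∧ B.card = k}

/-- For any graph `G`, the maximum nullity is at most the zero forcing number. -/
lemma zf_vanish {V : Type*} [Fintype V] (G : SimpleGraph V) (A : Matrix V V ℝ)
    (hA : A ∈ SG G) (x : V → ℝ) (hx : A.mulVec x = 0) (B : Set V)
    (hB0 : ∀ b ∈ B, x b = 0) : ∀ v, ZFClosed G B v → x v = 0 := by
  intro v hv
  induction hv with
  | init h => exact hB0 _ h
  | @force u v hu hadj huniq ihu ihw =>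
    have hrow : ∑ j, A u j * x j = 0 := by
      have := congrFun hx u
      simpa [Matrix.mulVec, dotProduct] using this
    have hsum : ∑ j, A u j * x j = A u v * x v := by
      refine Finset.sum_eq_single v (fun j _ hj => ?_) (by simp)
      by_cases hju : j = u
      · subst hju; rw [ihu, mul_zero]
      · by_cases hadj' : G.Adj u j
        · rw [ihw j hadj' hj, mul_zero]
        · have : A u j = 0 := by
            by_contra h
            exact hadj' ((hA.2 u j (Ne.symm hju)).mp h)
          rw [this, zero_mul]
    have hAuv : A u v ≠ 0 := (hA.2 u v (G.ne_of_adj hadj)).mpr hadj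
    have := hsum ▸ hrow
    rcases mul_eq_zero.mp this with h | h
    · exact absurd h hAuv
    · exact h

lemma nullity_le_card {V : Type*} [Fintype V] [DecidableEq V] (G : SimpleGraph V)
    (A : Matrix V V ℝ) (hA : A ∈ SG G) (B : Finset V)
    (hB : IsZeroForcingSet G ↑B) : Fintype.card V - A.rank ≤ B.card := by
  classical
  set f : LinearMap.ker A.mulVecLin →ₗ[ℝ] (↥B → ℝ) :=
    (LinearMap.funLeft ℝ ℝ (Subtype.val : ↥B → V)).comp
      (Submodule.subtype _) with hf
  have hinj : Function.Injective f := by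
    rw [← LinearMap.ker_eq_bot]
    rw [Submodule.eq_bot_iff]
    rintro ⟨x, hxker⟩ hx0
    have hx : A.mulVec x = 0 := hxker
    have hB0 : ∀ b ∈ (B : Set V), x b = 0 := by
      intro b hb
      have h0 : f ⟨x, hxker⟩ = 0 := hx0
      have := congrFun h0 ⟨b, hb⟩
      simpa [hf, LinearMap.funLeft] using this
    have hx0' : x = 0 := funext fun v => zf_vanish G A hA x hx _ hB0 v (hB v)
    exact Subtype.ext hx0'
  have hle : Module.finrank ℝ (LinearMap.ker A.mulVecLin) ≤
      Module.finrank ℝ (↥B → ℝ) :=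
    LinearMap.finrank_le_finrank_of_injective hinj
  have h1 : Module.finrank ℝ (↥B → ℝ) = B.card := by
    rw [Module.finrank_fintype_fun_eq_card]
    exact Fintype.card_coe B
  have h2 : A.rank + Module.finrank ℝ (LinearMap.ker A.mulVecLin) = Fintype.card V := by
    have := LinearMap.finrank_range_add_finrank_ker A.mulVecLin
    rwa [Module.finrank_fintype_fun_eq_card] at this
  omega

theorem maxNullity_le_zfNum {V : Type*} [Fintype V] (G : SimpleGraph V) :
    maxNullity G ≤ zfNum G := by
  classical
  have hne : {k | ∃ A ∈ SG G, Fintype.card V - A.rank = k}.Nonempty := by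
    refine ⟨_, G.adjMatrix ℝ, ⟨G.isSymm_adjMatrix, ?_⟩, rfl⟩
    intro i j _
    simp [SimpleGraph.adjMatrix]
  have hzf : ∃ B : Finset V, IsZeroForcingSet G ↑B ∧ B.card = zfNum G := by
    have : {k | ∃ B : Finset V, IsZeroForcingSet G ↑B ∧ B.card = k}.Nonempty :=
      ⟨_, Finset.univ, fun v => ZFClosed.init (by simp), rfl⟩
    exact Nat.sInf_mem this
  obtain ⟨B, hB, hBcard⟩ := hzf
  refine csSup_le hne ?_
  rintro k ⟨A, hA, rfl⟩
  rw [← hBcard]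
  exact nullity_le_card G A hA B hB
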